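/- Let R be a commutative local ring with maximal ideal J in which 2 is not invertible. Let a, b be n×n matrices over R with a³ = b³ = 1, such that all entries of a lie in the prime subring of R (the subring generated by 1), and a ≡ b modulo J (i.e., a − b has all entries in J). Then a and b are conjugate in GL_n(R): there exists g ∈ GL_n(R) with b = g·a·g⁻¹. -/

import Mathlib

open Matrix IsLocalRing

/-- Over a commutative local ring `R` in which `2` is not invertible, if `a, b` are
`n × n` matrices with `a³ = b³ = 1`, the entries of `a` lie in the prime subring,
and `a ≡ b` modulo the maximal ideal, then `a` and `b` are conjugate in `GL_n(R)`. -/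
theorem stmt3 {R : Type*} [CommRing R] [IsLocalRing R] (h2 : ¬ IsUnit (2 : R)) (n : ℕ)
    (a b : Matrix (Fin n) (Fin n) R) (ha : a ^ 3 = 1) (hb : b ^ 3 = 1)
    (haZ : ∀ i j, a i j ∈ (⊥ : Subring R))
    (hab : ∀ i j, a i j - b i j ∈ maximalIdeal R) :
    ∃ g : (Matrix (Fin n) (Fin n) R)ˣ,
      b = (g : Matrix (Fin n) (Fin n) R) * a * ((g⁻¹ : (Matrix (Fin n) (Fin n) R)ˣ) : Matrix (Fin n) (Fin n) R) := by
  have h3 : IsUnit (3 : R) := by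
    have h := IsLocalRing.isUnit_one_sub_self_of_mem_nonunits (a := (-2 : R))
      (by simpa using h2)
    norm_num at h
    exact h
  set g : Matrix (Fin n) (Fin n) R := 1 + b * a ^ 2 + b ^ 2 * a with hg
  have key : b * g = g * a := by
    have e1 : b * g = b + b ^ 2 * a ^ 2 + b ^ 3 * a := by rw [hg]; noncomm_ring
    have e2 : g * a = a + b * a ^ 3 + b ^ 2 * a ^ 2 := by rw [hg]; noncomm_ring
    rw [e1, e2, hb, ha]; noncomm_ring
  set φ := IsLocalRing.residue R with hφ
  have hmapab : φ.mapMatrix a = φ.mapMatrix b := by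
    ext i j
    have h0 : φ (a i j - b i j) = 0 := (Ideal.Quotient.eq_zero_iff_mem).mpr (hab i j)
    rw [map_sub, sub_eq_zero] at h0
    simpa using h0
  have ha' : (φ.mapMatrix a) ^ 3 = 1 := by rw [← map_pow, ha, _root_.map_one]
  have hgmap : φ.mapMatrix g = (3 : ResidueField R) • 1 := by
    have : φ.mapMatrix g = 1 + (φ.mapMatrix b) * (φ.mapMatrix a) ^ 2
        + (φ.mapMatrix b) ^ 2 * (φ.mapMatrix a) := by
      rw [hg]
      simp only [_root_.map_add, _root_.map_mul, map_pow, _root_.map_one]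
    rw [this, ← hmapab]
    have : (1 : Matrix (Fin n) (Fin n) (ResidueField R)) + φ.mapMatrix a * (φ.mapMatrix a) ^ 2
        + (φ.mapMatrix a) ^ 2 * φ.mapMatrix a = 1 + (φ.mapMatrix a) ^ 3 + (φ.mapMatrix a) ^ 3 := by
      noncomm_ring
    rw [this, ha']
    ext i j
    by_cases hij : i = j <;> simp [hij, Matrix.one_apply] <;> norm_num
  have hdet : IsUnit g.det := by
    rw [← IsLocalRing.notMem_maximalIdeal]
    intro hmem
    have h0 : φ g.det = 0 := (Ideal.Quotient.eq_zero_iff_mem).mpr hmem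
    rw [RingHom.map_det, hgmap, Matrix.det_smul, Matrix.det_one, mul_one] at h0
    have h3K : (3 : ResidueField R) ≠ 0 := by
      have := h3.map φ
      simpa [map_ofNat φ 3] using this.ne_zero
    exact pow_ne_zero _ h3K (by simpa using h0)
  have hu : IsUnit g := (Matrix.isUnit_iff_isUnit_det g).mpr hdet
  obtain ⟨u, hu⟩ := hu
  refine ⟨u, ?_⟩
  have h5 : b * ((u : Matrix (Fin n) (Fin n) R) * (↑u⁻¹ : Matrix (Fin n) (Fin n) R))
      = (u : Matrix (Fin n) (Fin n) R) * a * (↑u⁻¹ : Matrix (Fin n) (Fin n) R) := by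
    rw [← mul_assoc, hu, key, ← hu, mul_assoc]
  simpa [Units.mul_inv] using h5
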